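/- Best-first enumeration by relative plan quality is complete: every root-to-leaf path with quality at least q is eventually emitted, assuming stems below quality q are pruned and emission continues until the queue empties. -/

import Mathlib

variable {Node : Type*} [DecidableEq Node]

noncomputable def maxQ (Q : Node → ℝ) (C : Node → Finset Node) (σ : Node) : ℝ :=
  (C σ).fold max 0 Q

noncomputable def planQ (Q : Node → ℝ) (C : Node → Finset Node) : List Node → ℝ
  | [] => 1
  | [_] => 1
  | a :: b :: rest => (Q b / maxQ Q C a) * planQ Q C (b :: rest)

section Lemmas
variable {Q : Node → ℝ} {C : Node → Finset Node}

lemma maxQ_pos (hpos : ∀ σ, 0 < Q σ) {a b : Node} (hb : b ∈ C a) : 0 < maxQ Q C a :=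
  lt_of_lt_of_le (hpos b) ((Finset.le_fold_max _).mpr (Or.inr ⟨b, hb, le_rfl⟩))

lemma ratio_pos (hpos : ∀ σ, 0 < Q σ) {a b : Node} (hb : b ∈ C a) :
    0 < Q b / maxQ Q C a := div_pos (hpos b) (maxQ_pos hpos hb)

lemma ratio_le_one (hpos : ∀ σ, 0 < Q σ) {a b : Node} (hb : b ∈ C a) :
    Q b / maxQ Q C a ≤ 1 :=
  div_le_one_of_le₀ ((Finset.le_fold_max _).mpr (Or.inr ⟨b, hb, le_rfl⟩)) (maxQ_pos hpos hb).le

lemma planQ_pos (hpos : ∀ σ, 0 < Q σ) :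
    ∀ l : List Node, l.Chain' (fun a b => b ∈ C a) → 0 < planQ Q C l
  | [], _ => one_pos
  | [_], _ => one_pos
  | a :: b :: rest, h => by
    rw [planQ]
    have h' := List.isChain_cons_cons.mp h
    exact mul_pos (ratio_pos hpos h'.1) (planQ_pos hpos (b :: rest) h'.2)

lemma planQ_le_one (hpos : ∀ σ, 0 < Q σ) :
    ∀ l : List Node, l.Chain' (fun a b => b ∈ C a) → planQ Q C l ≤ 1
  | [], _ => le_rfl
  | [_], _ => le_rfl
  | a :: b :: rest, h => by
    rw [planQ]
    have h' := List.isChain_cons_cons.mp h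
    have := mul_le_mul (ratio_le_one hpos h'.1) (planQ_le_one hpos (b :: rest) h'.2)
        (planQ_pos hpos (b :: rest) h'.2).le zero_le_one
    linarith

lemma planQ_append_le (hpos : ∀ σ, 0 < Q σ) :
    ∀ (xs ys : List Node), xs ≠ [] → (xs ++ ys).Chain' (fun a b => b ∈ C a) →
      planQ Q C (xs ++ ys) ≤ planQ Q C xs
  | [], _, h, _ => absurd rfl h
  | [a], ys, _, hch => by
    simpa [planQ] using planQ_le_one hpos (a :: ys) (by simpa using hch)
  | a :: b :: xs, ys, _, hch => by
    rw [List.cons_append, List.cons_append] at hch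
    have h' := List.isChain_cons_cons.mp hch
    have ih := planQ_append_le hpos (b :: xs) ys (by simp) (by simpa [List.Chain'] using h'.2)
    simp only [List.cons_append, planQ] at *
    exact mul_le_mul_of_nonneg_left ih (ratio_pos hpos h'.1).le

lemma planQ_prefix_le (hpos : ∀ σ, 0 < Q σ) {φ ψ : List Node} (hp : φ <+: ψ)
    (hφ : φ ≠ []) (hch : ψ.Chain' (fun a b => b ∈ C a)) :
    planQ Q C ψ ≤ planQ Q C φ := by
  obtain ⟨ys, rfl⟩ := hp
  exact planQ_append_le hpos φ ys hφ hch

lemma next_mem {ψ π : List Node} {l c : Node} {rest : List Node}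
    (hch : ψ.Chain' (fun a b => b ∈ C a)) (hlast : π.getLast? = some l)
    (heq : ψ = π ++ c :: rest) : c ∈ C l := by
  subst heq
  exact (List.isChain_append.mp hch).2.2 l hlast c rfl

lemma strict_prefix_decomp {σ ψ : List Node} (hp : σ <+: ψ) (hne : σ ≠ ψ) :
    ∃ c rest, ψ = σ ++ c :: rest := by
  obtain ⟨ys, rfl⟩ := hp
  cases ys with
  | nil => simp at hne
  | cons c rest => exact ⟨c, rest, rfl⟩

end Lemmas


open Classical in
/-- One step of best-first enumeration with quality pruning: pop a
maximum-quality stem; if it ends at a leaf, emit it; otherwise push exactly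
those child extensions whose quality is at least q. -/
inductive PrunedStep (Q : Node → ℝ) (C : Node → Finset Node) (q : ℝ) :
    Multiset (List Node) × List (List Node) →
    Multiset (List Node) × List (List Node) → Prop
  | emit (O : Multiset (List Node)) (E : List (List Node)) (π : List Node) (l : Node)
      (hmem : π ∈ O) (hmax : ∀ ψ ∈ O, planQ Q C ψ ≤ planQ Q C π)
      (hlast : π.getLast? = some l) (hleaf : C l = ∅) :
      PrunedStep Q C q (O, E) (O.erase π, E ++ [π])
  | expand (O : Multiset (List Node)) (E : List (List Node)) (π : List Node) (l : Node)
      (hmem : π ∈ O) (hmax : ∀ ψ ∈ O, planQ Q C ψ ≤ planQ Q C π)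
      (hlast : π.getLast? = some l) (hne : (C l).Nonempty) :
      PrunedStep Q C q (O, E)
        (O.erase π +
          (((C l).filter fun c => q ≤ planQ Q C (π ++ [c])).val.map fun c => π ++ [c]), E)

open Classical in
lemma step_preserve {Q : Node → ℝ} {C : Node → Finset Node} {q : ℝ}
    (hpos : ∀ σ, 0 < Q σ) {ψ : List Node}
    (hchain : ψ.Chain' (fun a b => b ∈ C a))
    (hleaf : ∃ l, ψ.getLast? = some l ∧ C l = ∅)
    (hq : q ≤ planQ Q C ψ)
    {s t : Multiset (List Node) × List (List Node)}
    (hstep : PrunedStep Q C q s t)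
    (hinv : ψ ∈ s.2 ∨ ∃ π ∈ s.1, π <+: ψ) :
    ψ ∈ t.2 ∨ ∃ π ∈ t.1, π <+: ψ := by
  cases hstep with
  | emit O E π l hmem hmax hlast hl =>
    rcases hinv with h | ⟨σ, hσO, hσp⟩
    · exact Or.inl (by simp at h ⊢; exact Or.inl h)
    by_cases hσπ : σ = π
    · subst hσπ
      by_cases hσψ : σ = ψ
      · exact Or.inl (by simp [hσψ])
      · obtain ⟨c, rest, heq⟩ := strict_prefix_decomp hσp hσψ
        have := next_mem hchain hlast heq
        simp [hl] at this
    · exact Or.inr ⟨σ, (Multiset.mem_erase_of_ne hσπ).mpr hσO, hσp⟩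
  | expand O E π l hmem hmax hlast hne =>
    rcases hinv with h | ⟨σ, hσO, hσp⟩
    · exact Or.inl h
    by_cases hσπ : σ = π
    · subst hσπ
      have hσψ : σ ≠ ψ := by
        rintro rfl
        obtain ⟨l', hl', hC⟩ := hleaf
        rw [hlast] at hl'
        obtain rfl : l = l' := by injection hl'
        rw [hC] at hne
        exact absurd hne Finset.not_nonempty_empty
      obtain ⟨c, rest, heq⟩ := strict_prefix_decomp hσp hσψ
      have hc : c ∈ C l := next_mem hchain hlast heq
      have hpre : σ ++ [c] <+: ψ := ⟨rest, by simp [heq]⟩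
      have hqc : q ≤ planQ Q C (σ ++ [c]) :=
        le_trans hq (planQ_prefix_le hpos hpre (by simp) hchain)
      refine Or.inr ⟨σ ++ [c], ?_, hpre⟩
      rw [Multiset.mem_add]
      right
      rw [Multiset.mem_map]
      refine ⟨c, ?_, rfl⟩
      rw [Finset.mem_val, Finset.mem_filter]
      exact ⟨hc, hqc⟩
    · exact Or.inr ⟨σ, Multiset.mem_add.mpr
        (Or.inl ((Multiset.mem_erase_of_ne hσπ).mpr hσO)), hσp⟩


/-- Best-first enumeration with pruning is complete: once the open list is
empty, every root-to-leaf path of quality at least q has been emitted. -/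
theorem best_first_complete (Q : Node → ℝ) (C : Node → Finset Node) (q : ℝ)
    (hpos : ∀ σ, 0 < Q σ) (root : Node)
    (E : List (List Node))
    (hrun : Relation.ReflTransGen (PrunedStep Q C q)
      (({[root]} : Multiset (List Node)), ([] : List (List Node)))
      ((0 : Multiset (List Node)), E))
    (ψ : List Node) (hhead : ψ.head? = some root)
    (hchain : List.Chain' (fun a b => b ∈ C a) ψ)
    (hleaf : ∃ l, ψ.getLast? = some l ∧ C l = ∅)
    (hq : q ≤ planQ Q C ψ) :
    ψ ∈ E := by
  have key : ∀ {s t : Multiset (List Node) × List (List Node)},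
      Relation.ReflTransGen (PrunedStep Q C q) s t →
      (ψ ∈ s.2 ∨ ∃ π ∈ s.1, π <+: ψ) → (ψ ∈ t.2 ∨ ∃ π ∈ t.1, π <+: ψ) := by
    intro s t h
    induction h with
    | refl => exact id
    | tail _ hstep ih => exact fun h0 => step_preserve hpos hchain hleaf hq hstep (ih h0)
  have h0 : ψ ∈ ([] : List (List Node)) ∨
      ∃ π ∈ ({[root]} : Multiset (List Node)), π <+: ψ := by
    right
    refine ⟨[root], Multiset.mem_singleton_self _, ?_⟩
    cases ψ with
    | nil => simp at hhead
    | cons a t =>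
      obtain rfl : a = root := by simpa using hhead
      exact ⟨t, rfl⟩
  rcases key hrun h0 with h | ⟨π, hπ, -⟩
  · exact h
  · exact absurd hπ (Multiset.notMem_zero π)
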